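/- Every Ricci inheritance in an M-projectively flat spacetime is a conformal motion: let (V,g,R) be M-projectively flat with Scal ≠ 0, let h be a symmetric bilinear form on V (representing the Lie derivative ℒ_ξ g of the metric along a vector field ξ), and suppose the Lie derivative of the Ricci tensor is L = (Scal/4)·h (the Leibniz expansion of ℒ_ξ((Scal/4)g), valid since Scal is constant on an M-projectively flat spacetime). If the Ricci inheritance condition L = 2Ω·Ric holds for a real number Ω, then h = 2Ω·g, i.e., ξ is a conformal motion with conformal function Ω. -/

import Mathlib

/-- The Ricci tensor of a quadrilinear curvature tensor `R` on a real vector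
space, computed with respect to a `g`-orthonormal basis `e` with signs `ε`:
`Ric(x,y) = Σ_a ε_a R(e_a, x, y, e_a)`. -/
noncomputable def ricci {V : Type*} [AddCommGroup V] [Module ℝ V]
    (R : V →ₗ[ℝ] V →ₗ[ℝ] V →ₗ[ℝ] V →ₗ[ℝ] ℝ) (e : Fin 4 → V) (ε : Fin 4 → ℝ)
    (x y : V) : ℝ :=
  ∑ a, ε a * R (e a) x y (e a)

/-- The scalar curvature `Scal = Σ_a ε_a Ric(e_a, e_a)`. -/
noncomputable def scalarCurv {V : Type*} [AddCommGroup V] [Module ℝ V]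
    (R : V →ₗ[ℝ] V →ₗ[ℝ] V →ₗ[ℝ] V →ₗ[ℝ] ℝ) (e : Fin 4 → V) (ε : Fin 4 → ℝ) : ℝ :=
  ∑ a, ε a * ricci R e ε (e a) (e a)

/-- The M-projective curvature tensor
`W(x,y,z,w) = R(x,y,z,w) + (1/6)[g(x,z)Ric(y,w) − g(x,w)Ric(y,z)
  + Ric(x,z)g(y,w) − Ric(x,w)g(y,z)]`. -/
noncomputable def mProj {V : Type*} [AddCommGroup V] [Module ℝ V]
    (g : V →ₗ[ℝ] V →ₗ[ℝ] ℝ)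
    (R : V →ₗ[ℝ] V →ₗ[ℝ] V →ₗ[ℝ] V →ₗ[ℝ] ℝ) (e : Fin 4 → V) (ε : Fin 4 → ℝ)
    (x y z w : V) : ℝ :=
  R x y z w + (1 / 6) * (g x z * ricci R e ε y w - g x w * ricci R e ε y z
    + ricci R e ε x z * g y w - ricci R e ε x w * g y z)

/-- Every Ricci inheritance in an M-projectively flat spacetime is
a conformal motion: if `ℒ_ξ Ric = (Scal/4)·ℒ_ξ g` (Leibniz expansion, `Scal`
constant and nonzero) and the Ricci inheritance condition `ℒ_ξ Ric = 2Ω·Ric`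
holds, then `ℒ_ξ g = 2Ω·g`. -/
theorem ricciInheritance_isConformalMotion_of_mProjFlat
    {V : Type*} [AddCommGroup V] [Module ℝ V] [FiniteDimensional ℝ V]
    (hdim : Module.finrank ℝ V = 4)
    (g : V →ₗ[ℝ] V →ₗ[ℝ] ℝ)
    (hg_symm : ∀ x y, g x y = g y x)
    (hg_nondeg : ∀ x, (∀ y, g x y = 0) → x = 0)
    (R : V →ₗ[ℝ] V →ₗ[ℝ] V →ₗ[ℝ] V →ₗ[ℝ] ℝ)
    (hR_skew₁ : ∀ x y z w, R x y z w = - R y x z w)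
    (hR_skew₂ : ∀ x y z w, R x y z w = - R x y w z)
    (hR_pair : ∀ x y z w, R x y z w = R z w x y)
    (hR_bianchi : ∀ x y z w, R x y z w + R y z x w + R z x y w = 0)
    (e : Module.Basis (Fin 4) ℝ V) (ε : Fin 4 → ℝ)
    (hε : ∀ a, ε a = 1 ∨ ε a = -1)
    (horth : ∀ a b, g (e a) (e b) = if a = b then ε a else 0)
    (hflat : ∀ x y z w, mProj g R ⇑e ε x y z w = 0)
    (hScal : scalarCurv R ⇑e ε ≠ 0)
    (h L : V →ₗ[ℝ] V →ₗ[ℝ] ℝ)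
    (hh_symm : ∀ x y, h x y = h y x)
    (Ω : ℝ)
    (hLeibniz : ∀ x y, L x y = (scalarCurv R ⇑e ε / 4) * h x y)
    (hinherit : ∀ x y, L x y = 2 * Ω * ricci R ⇑e ε x y) :
    ∀ x y, h x y = 2 * Ω * g x y := by

  -- ε a squares to 1
  have hε2 : ∀ a, ε a * ε a = 1 := fun a => by rcases hε a with h1 | h1 <;> simp [h1]
  -- symmetry of the Ricci tensor
  have hric_symm : ∀ x y, ricci R ⇑e ε x y = ricci R ⇑e ε y x := by
    intro x y
    unfold ricci
    refine Finset.sum_congr rfl fun a _ => ?_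
    have : R (e a) x y (e a) = R (e a) y x (e a) := by
      rw [hR_pair (e a) x y (e a), hR_skew₁ y (e a) (e a) x, hR_skew₂ (e a) y (e a) x]
      ring
    rw [this]
  -- coordinates with respect to the orthonormal basis
  have hy_expand : ∀ y : V, y = ∑ a, (ε a * g (e a) y) • e a := by
    intro y
    have hcoord : ∀ a : Fin 4, e.repr y a = ε a * g (e a) y := by
      intro a
      have : g (e a) y = e.repr y a * ε a := by
        conv_lhs => rw [← e.sum_repr y]
        simp only [map_sum, map_smul, LinearMap.smul_apply, smul_eq_mul, horth, mul_ite, mul_zero,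
          Finset.sum_ite_eq, Finset.mem_univ, if_true, ite_true]
      rw [this, ← mul_assoc, mul_comm (ε a), mul_assoc, hε2, mul_one]
    conv_lhs => rw [← e.sum_repr y]
    exact Finset.sum_congr rfl fun a _ => by rw [hcoord]
  -- ricci expanded along a basis in the last argument
  have hexp : ∀ x y, ∑ a, ε a * g (e a) y * ricci R ⇑e ε x (e a) = ricci R ⇑e ε x y := by
    intro x y
    conv_rhs => rw [hy_expand y]
    unfold ricci
    simp only [map_sum, map_smul, LinearMap.sum_apply, LinearMap.smul_apply, smul_eq_mul,
      Finset.mul_sum]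
    rw [Finset.sum_comm]
    exact Finset.sum_congr rfl fun a _ => Finset.sum_congr rfl fun b _ => by ring
  -- key identity: Ric = (Scal/4) g
  have hkey : ∀ x y, ricci R ⇑e ε x y = scalarCurv R ⇑e ε / 4 * g x y := by
    intro x y
    have h0 : ∑ a, ε a * mProj g R ⇑e ε (e a) x y (e a) = 0 := by simp [hflat]
    have hexpand : ∑ a, ε a * mProj g R ⇑e ε (e a) x y (e a)
        = (∑ a, ε a * R (e a) x y (e a))
          + (1 / 6) * ((∑ a, ε a * (g (e a) y * ricci R ⇑e ε x (e a)))
            - (∑ a, ε a * (g (e a) (e a) * ricci R ⇑e ε x y))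
            + (∑ a, ε a * (ricci R ⇑e ε (e a) y * g x (e a)))
            - (∑ a, ε a * (ricci R ⇑e ε (e a) (e a) * g x y))) := by
      unfold mProj
      simp only [Finset.mul_sum, ← Finset.sum_sub_distrib, ← Finset.sum_add_distrib]
      exact Finset.sum_congr rfl fun a _ => by ring
    rw [hexpand] at h0
    have e0 : ∑ a, ε a * R (e a) x y (e a) = ricci R ⇑e ε x y := rfl
    have e1 : ∑ a, ε a * (g (e a) y * ricci R ⇑e ε x (e a)) = ricci R ⇑e ε x y := by
      rw [← hexp x y]; exact Finset.sum_congr rfl fun a _ => by ring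
    have e2 : ∑ a, ε a * (g (e a) (e a) * ricci R ⇑e ε x y) = 4 * ricci R ⇑e ε x y := by
      have : ∀ a : Fin 4, ε a * (g (e a) (e a) * ricci R ⇑e ε x y) = ricci R ⇑e ε x y := by
        intro a
        rw [horth a a, if_pos rfl, ← mul_assoc, hε2, one_mul]
      rw [Finset.sum_congr rfl fun a _ => this a]
      simp [Finset.sum_const]
    have e3 : ∑ a, ε a * (ricci R ⇑e ε (e a) y * g x (e a)) = ricci R ⇑e ε x y := by
      rw [hric_symm x y, ← hexp y x]
      exact Finset.sum_congr rfl fun a _ => by rw [hric_symm (e a) y, hg_symm x (e a)]; ring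
    have e4 : ∑ a, ε a * (ricci R ⇑e ε (e a) (e a) * g x y)
        = scalarCurv R ⇑e ε * g x y := by
      unfold scalarCurv
      rw [Finset.sum_mul]
      exact Finset.sum_congr rfl fun a _ => by ring
    rw [e0, e1, e2, e3, e4] at h0
    linarith
  -- conclude
  intro x y
  have h1 := hLeibniz x y
  have h2 := hinherit x y
  rw [hkey x y] at h2
  have h3 : scalarCurv R ⇑e ε / 4 * h x y
      = scalarCurv R ⇑e ε / 4 * (2 * Ω * g x y) := by rw [← h1, h2]; ring
  have h4 : scalarCurv R ⇑e ε / 4 ≠ 0 := div_ne_zero hScal (by norm_num)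
  exact mul_left_cancel₀ h4 h3
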